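/- For every d ≥ 1, the function MAX : ℝ^d → ℝ, x ↦ max_i x_i, can be written as a composition of at most ⌈log₂ d⌉ layers, each of the form (affine map) ∘ (coordinatewise ReLU) ∘ (affine map), using the identity max(a,b) = (ReLU(a−b) + ReLU(b−a) + a + b)/2 recursively on pairs. -/

import Mathlib

/-- A single ReLU network layer: `x ↦ A₂ · ReLU(A₁ x + b₁) + b₂`. -/
def IsReLULayer {n m : ℕ} (f : (Fin n → ℝ) → (Fin m → ℝ)) : Prop :=
  ∃ (p : ℕ) (A₁ : Matrix (Fin p) (Fin n) ℝ) (b₁ : Fin p → ℝ)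
    (A₂ : Matrix (Fin m) (Fin p) ℝ) (b₂ : Fin m → ℝ),
    f = fun x => A₂.mulVec (fun i => max (A₁.mulVec x i + b₁ i) 0) + b₂

/-- `ReLUNet L n m f` : `f : ℝ^n → ℝ^m` is a composition of `L` ReLU layers. -/
inductive ReLUNet : ℕ → (n m : ℕ) → ((Fin n → ℝ) → (Fin m → ℝ)) → Prop
  | id (n : ℕ) : ReLUNet 0 n n (fun x => x)
  | comp {L n p m : ℕ} {f : (Fin n → ℝ) → (Fin p → ℝ)}
      {g : (Fin p → ℝ) → (Fin m → ℝ)} :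
      ReLUNet L n p f → IsReLULayer g → ReLUNet (L + 1) n m (g ∘ f)

noncomputable def sA : Fin 4 → ℝ := ![1, -1, 1, -1]
noncomputable def sB : Fin 4 → ℝ := ![-1, 1, 1, -1]
noncomputable def w4 : Fin 4 → ℝ := ![1/2, 1/2, 1/2, -1/2]

lemma key (a b : ℝ) : (∑ r : Fin 4, w4 r * max (sA r * a + sB r * b) 0) = max a b := by
  simp only [Fin.sum_univ_four, sA, sB, w4, Matrix.cons_val_zero, Matrix.cons_val_one,
    Matrix.head_cons, Matrix.cons_val_two, Matrix.tail_cons, Matrix.cons_val_three]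
  simp only [max_def]
  split_ifs <;> linarith

def aIdx (d : ℕ) (hd : 1 ≤ d) (i : Fin ((d+1)/2)) : Fin d :=
  ⟨2*i.val, by have := i.isLt; omega⟩
def bIdx (d : ℕ) (hd : 1 ≤ d) (i : Fin ((d+1)/2)) : Fin d :=
  ⟨min (2*i.val+1) (d-1), by have := i.isLt; omega⟩

lemma layer_exists (d : ℕ) (hd : 1 ≤ d) :
    IsReLULayer (fun (x : Fin d → ℝ) (i : Fin ((d+1)/2)) =>
      max (x (aIdx d hd i)) (x (bIdx d hd i))) := by
  classical
  set m := (d+1)/2 with hm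
  set e := (finProdFinEquiv : Fin m × Fin 4 ≃ Fin (m * 4)) with he
  set A1 : Matrix (Fin (m*4)) (Fin d) ℝ := fun k j =>
    (if j = aIdx d hd (e.symm k).1 then sA (e.symm k).2 else 0)
      + (if j = bIdx d hd (e.symm k).1 then sB (e.symm k).2 else 0) with hA1
  set A2 : Matrix (Fin m) (Fin (m*4)) ℝ := fun i k =>
    if (e.symm k).1 = i then w4 (e.symm k).2 else 0 with hA2
  refine ⟨m*4, A1, 0, A2, 0, ?_⟩
  funext x i
  set y : Fin (m*4) → ℝ := fun k => max (A1.mulVec x k + (0 : Fin (m*4) → ℝ) k) 0 with hy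
  have h1 : ∀ k, A1.mulVec x k
      = sA (e.symm k).2 * x (aIdx d hd (e.symm k).1)
        + sB (e.symm k).2 * x (bIdx d hd (e.symm k).1) := by
    intro k
    simp [hA1, Matrix.mulVec, dotProduct, add_mul, ite_mul, zero_mul,
      Finset.sum_add_distrib, Finset.sum_ite_eq']
  have h2 : (A2.mulVec y + 0) i = ∑ p : Fin m × Fin 4, A2 i (e p) * y (e p) := by
    simp only [Pi.add_apply, Pi.zero_apply, add_zero, Matrix.mulVec, dotProduct]
    exact (Equiv.sum_comp e (fun k => A2 i k * y k)).symm
  have h3 : ∀ p : Fin m × Fin 4, A2 i (e p) * y (e p)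
      = if p.1 = i then w4 p.2 * y (e p) else 0 := by
    intro p
    simp [hA2, ite_mul, zero_mul]
  rw [h2]
  simp only [h3]
  rw [Fintype.sum_prod_type]
  rw [Finset.sum_congr rfl (fun i' _ => show (∑ r, if i' = i then w4 r * y (e (i', r)) else 0)
      = if i' = i then (∑ r : Fin 4, w4 r * y (e (i', r))) else 0 by split_ifs <;> simp)]
  rw [Finset.sum_ite_eq' Finset.univ i (fun i' => ∑ r : Fin 4, w4 r * y (e (i', r)))]
  simp only [Finset.mem_univ, if_true]
  have h4 : ∀ r : Fin 4, y (e (i, r)) = max (sA r * x (aIdx d hd i) + sB r * x (bIdx d hd i)) 0 := by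
    intro r
    simp [hy, h1, Equiv.symm_apply_apply]
  simp only [h4]
  exact (key _ _).symm

lemma sup'_reduce (d : ℕ) (hd : 1 ≤ d) (x : Fin d → ℝ)
    (h1 : (Finset.univ : Finset (Fin d)).Nonempty)
    (h2 : (Finset.univ : Finset (Fin ((d+1)/2))).Nonempty) :
    Finset.univ.sup' h2 (fun i => max (x (aIdx d hd i)) (x (bIdx d hd i)))
      = Finset.univ.sup' h1 x := by
  apply le_antisymm
  · apply Finset.sup'_le
    intro i _
    exact max_le (Finset.le_sup' x (Finset.mem_univ _)) (Finset.le_sup' x (Finset.mem_univ _))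
  · apply Finset.sup'_le
    intro j _
    have hjlt := j.isLt
    have hj : (⟨j.val/2, by omega⟩ : Fin ((d+1)/2)) ∈ Finset.univ :=
      Finset.mem_univ _
    refine le_trans ?_ (Finset.le_sup' _ hj)
    rcases Nat.even_or_odd j.val with he | ho
    · obtain ⟨c, hc⟩ := he
      have : aIdx d hd ⟨j.val/2, by omega⟩ = j := by
        apply Fin.ext; show 2*(j.val/2) = j.val; omega
      rw [this]
      exact le_max_left _ _
    · obtain ⟨c, hc⟩ := ho
      have : bIdx d hd ⟨j.val/2, by omega⟩ = j := by
        apply Fin.ext; show min (2*(j.val/2)+1) (d-1) = j.val; omega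
      rw [this]
      exact le_max_right _ _

lemma ReLUNet.precomp {L n p m : ℕ} {g : (Fin n → ℝ) → (Fin p → ℝ)}
    {f : (Fin p → ℝ) → (Fin m → ℝ)} (hg : IsReLULayer g) (hf : ReLUNet L p m f) :
    ReLUNet (L + 1) n m (f ∘ g) := by
  induction hf with
  | id q => exact (ReLUNet.id n).comp hg
  | comp hf' hg' ih =>
      have h := ReLUNet.comp (ih hg) hg'
      exact h

lemma aux : ∀ d : ℕ, 1 ≤ d → ∃ (L : ℕ), L ≤ Nat.clog 2 d ∧
    ∃ f : (Fin d → ℝ) → (Fin 1 → ℝ), ReLUNet L d 1 f ∧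
      ∀ (h : (Finset.univ : Finset (Fin d)).Nonempty) (x : Fin d → ℝ),
        f x 0 = Finset.univ.sup' h x := by
  intro d
  induction d using Nat.strong_induction_on with
  | _ d ih =>
    intro hd
    rcases eq_or_lt_of_le hd with h1 | h2
    · -- d = 1
      subst h1
      refine ⟨0, by simp, fun x => x, ReLUNet.id 1, ?_⟩
      intro h x
      have : (Finset.univ : Finset (Fin 1)) = {0} := by decide
      rw [Finset.sup'_congr h this (fun _ _ => rfl)]
      simp
    · -- 2 ≤ d
      have hd2 : 2 ≤ d := h2
      set m := (d+1)/2 with hm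
      have hm1 : 1 ≤ m := by omega
      have hmd : m < d := by omega
      obtain ⟨L, hL, f', hf', hval⟩ := ih m hmd hm1
      refine ⟨L + 1, ?_, f' ∘ (fun (x : Fin d → ℝ) (i : Fin m) =>
        max (x (aIdx d hd i)) (x (bIdx d hd i))), hf'.precomp (layer_exists d hd), ?_⟩
      · rw [Nat.clog_of_two_le one_lt_two hd2]
        have : (d + 2 - 1) / 2 = m := by omega
        rw [this]
        omega
      · intro h x
        have hne2 : (Finset.univ : Finset (Fin m)).Nonempty := ⟨⟨0, by omega⟩, Finset.mem_univ _⟩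
        show f' (fun i => max (x (aIdx d hd i)) (x (bIdx d hd i))) 0 = Finset.univ.sup' h x
        rw [hval hne2]
        exact sup'_reduce d hd x h hne2

theorem stmt19 (d : ℕ) (hd : 1 ≤ d) :
    ∃ (L : ℕ), L ≤ Nat.clog 2 d ∧
      ∃ f : (Fin d → ℝ) → (Fin 1 → ℝ), ReLUNet L d 1 f ∧
        ∀ x : Fin d → ℝ, f x 0 = Finset.univ.sup' (Finset.univ_nonempty_iff.mpr
            (Fin.pos_iff_nonempty.mp hd)) x := by
  obtain ⟨L, hL, f, hf, hval⟩ := aux d hd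
  exact ⟨L, hL, f, hf, fun x => hval _ x⟩
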